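/- Let C = {(t², t³) : t ∈ ℝ} ⊆ ℝ² be the cuspidal cubic curve. There is no open set U ⊆ ℝ² with C ⊆ U together with a Lipschitz map r : U → ℝ² satisfying r(U) ⊆ C and r(x) = x for all x ∈ C. In other words, C is not a Lipschitz retract of any of its open neighborhoods in ℝ². -/

import Mathlib

noncomputable section

open MvPolynomial Metric

/-- Interpret a plain function `Fin n → ℝ` as a point of Euclidean space `ℝⁿ`. -/
def toEuc {n : ℕ} (f : Fin n → ℝ) : EuclideanSpace ℝ (Fin n) := WithLp.toLp 2 f

/-- A basic semialgebraic set: the solution set of one polynomial equation and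
finitely many strict polynomial inequalities. -/
def IsBasicSemialgebraic {n : ℕ} (S : Set (EuclideanSpace ℝ (Fin n))) : Prop :=
  ∃ (p : MvPolynomial (Fin n) ℝ) (k : ℕ) (q : Fin k → MvPolynomial (Fin n) ℝ),
    S = {x | eval (fun i => x i) p = 0 ∧ ∀ j, 0 < eval (fun i => x i) (q j)}

/-- A semialgebraic set: a finite union of basic semialgebraic sets. -/
def IsSemialgebraic {n : ℕ} (S : Set (EuclideanSpace ℝ (Fin n))) : Prop :=
  ∃ (m : ℕ) (B : Fin m → Set (EuclideanSpace ℝ (Fin n))),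
    (∀ i, IsBasicSemialgebraic (B i)) ∧ S = ⋃ i, B i

/-- The sup norm of a point of `ℝⁿ`. -/
def supNorm {n : ℕ} (x : EuclideanSpace ℝ (Fin n)) : ℝ := ⨆ i, |x i|

/-- The cuspidal cubic curve `{(t², t³) : t ∈ ℝ} ⊆ ℝ²`. -/
def cuspCurve : Set (EuclideanSpace ℝ (Fin 2)) :=
  {p | ∃ t : ℝ, p = toEuc ![t ^ 2, t ^ 3]}

set_option maxHeartbeats 1000000 in
/-- The cuspidal cubic `C = {(t², t³)}` is not a Lipschitz retract of
any open neighborhood of itself in `ℝ²`: there is no open `U ⊇ C` and Lipschitz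
`r : U → ℝ²` with `r(U) ⊆ C` and `r = id` on `C`. -/
theorem cuspCurve_not_lipschitz_retract :
    ¬ ∃ (U : Set (EuclideanSpace ℝ (Fin 2)))
        (r : EuclideanSpace ℝ (Fin 2) → EuclideanSpace ℝ (Fin 2)) (L : NNReal),
      IsOpen U ∧ cuspCurve ⊆ U ∧ LipschitzOnWith L r U ∧
      (∀ x ∈ U, r x ∈ cuspCurve) ∧ (∀ x ∈ cuspCurve, r x = x) := by
  rintro ⟨U, r, L, hU, hCU, hLip, hrU, hid⟩
  -- origin is on the curve
  have h0C : toEuc ![(0:ℝ), 0] ∈ cuspCurve := ⟨0, by norm_num⟩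
  obtain ⟨ε, εpos, hball⟩ := Metric.isOpen_iff.mp hU _ (hCU h0C)
  set t : ℝ := min (ε/4) (min 1 (1/(4*((L:ℝ)+1)))) with ht
  have hL1 : (0:ℝ) < (L:ℝ)+1 := by positivity
  have htpos : 0 < t := by
    apply lt_min (by linarith) (lt_min one_pos (by positivity))
  have htε : t ≤ ε/4 := min_le_left _ _
  have ht1 : t ≤ 1 := le_trans (min_le_right _ _) (min_le_left _ _)
  have htL : t ≤ 1/(4*((L:ℝ)+1)) := le_trans (min_le_right _ _) (min_le_right _ _)
  -- points on the vertical segment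
  set pt : ℝ → EuclideanSpace ℝ (Fin 2) := fun y => toEuc ![t^2, y] with hpt
  have hdist0 : ∀ y : ℝ, |y| ≤ t^3 → dist (pt y) (toEuc ![(0:ℝ),0]) < ε := by
    intro y hy
    have : dist (pt y) (toEuc ![(0:ℝ),0]) = Real.sqrt (t^4 + y^2) := by
      rw [EuclideanSpace.dist_eq, Fin.sum_univ_two]
      simp [pt, toEuc, Real.dist_eq]
      ring_nf
    rw [this, show ε = Real.sqrt (ε^2) by rw [Real.sqrt_sq εpos.le]]
    apply Real.sqrt_lt_sqrt (by positivity)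
    have ht2 : t^2 ≤ 1 := by nlinarith [htpos, ht1]
    have h1 : t^4 ≤ t^2 := by nlinarith [sq_nonneg t, sq_nonneg (t^2)]
    have h2 : y^2 ≤ t^6 := by nlinarith [abs_nonneg y, sq_abs y, htpos]
    have h3 : t^6 ≤ t^2 := by nlinarith [sq_nonneg (t^2), sq_nonneg (t^3)]
    have h4 : t^2 ≤ (ε/4)^2 := by nlinarith [htpos]
    nlinarith
  have hmemU : ∀ y : ℝ, |y| ≤ t^3 → pt y ∈ U := fun y hy => hball (hdist0 y hy)
  -- endpoints are on the curve
  have haC : pt (t^3) ∈ cuspCurve := ⟨t, rfl⟩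
  have hbC : pt (-t^3) ∈ cuspCurve := by
    refine ⟨-t, ?_⟩
    show toEuc ![t^2, -t^3] = toEuc ![(-t)^2, (-t)^3]
    unfold toEuc
    congr 1 <;> ring_nf
  -- the function g
  set g : ℝ → ℝ := fun y => r (pt y) 1 with hg
  have hpt_cont : Continuous pt := by
    apply (PiLp.continuous_toLp 2 (fun _ : Fin 2 => ℝ)).comp
    apply continuous_pi; intro i
    fin_cases i
    · exact continuous_const
    · exact continuous_id
  have hgcont : ContinuousOn g (Set.Icc (-t^3) (t^3)) := by
    have h1 : ContinuousOn (fun y => r (pt y)) (Set.Icc (-t^3) (t^3)) :=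
      hLip.continuousOn.comp hpt_cont.continuousOn
        (fun y hy => hmemU y (abs_le.mpr ⟨hy.1, hy.2⟩))
    exact ((continuous_apply (1 : Fin 2)).comp (PiLp.continuous_ofLp 2 (fun _ : Fin 2 => ℝ))).comp_continuousOn h1
  have hga : g (t^3) = t^3 := by
    show r (pt (t^3)) 1 = t^3
    rw [hid _ haC]; rfl
  have hgb : g (-t^3) = -t^3 := by
    show r (pt (-t^3)) 1 = -t^3
    rw [hid _ hbC]; rfl
  have hivt := intermediate_value_Icc (by nlinarith [pow_pos htpos 3] : -t^3 ≤ t^3) hgcont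
  rw [hga, hgb] at hivt
  have h0mem : (0:ℝ) ∈ Set.Icc (-t^3) (t^3) := by
    constructor <;> nlinarith [pow_pos htpos 3]
  obtain ⟨y, hyI, hgy⟩ := hivt h0mem
  have hyabs : |y| ≤ t^3 := abs_le.mpr ⟨hyI.1, hyI.2⟩
  have hxU : pt y ∈ U := hmemU y hyabs
  obtain ⟨u, hu⟩ := hrU _ hxU
  have hu3 : u^3 = 0 := by
    have : r (pt y) 1 = u^3 := by rw [hu]; rfl
    rw [← this]; exact hgy
  have hu0 : u = 0 := by
    have := pow_eq_zero_iff (n := 3) (by norm_num) |>.mp hu3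
    exact this
  have hr0 : r (pt y) = toEuc ![(0:ℝ), 0] := by
    rw [hu, hu0]; norm_num
  have haU : pt (t^3) ∈ U := hmemU _ (by rw [abs_of_pos (by positivity)])
  have hd := hLip.dist_le_mul (pt y) hxU (pt (t^3)) haU
  rw [hr0, hid _ haC] at hd
  -- lower bound for LHS
  have hlhs : t^2 ≤ dist (toEuc ![(0:ℝ),0]) (pt (t^3)) := by
    have : dist (toEuc ![(0:ℝ),0]) (pt (t^3)) = Real.sqrt (t^4 + t^6) := by
      rw [EuclideanSpace.dist_eq, Fin.sum_univ_two]
      simp [pt, toEuc, Real.dist_eq]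
      ring_nf
      rw [abs_of_pos htpos]
    rw [this, show t^2 = Real.sqrt ((t^2)^2) by rw [Real.sqrt_sq (by positivity)]]
    apply Real.sqrt_le_sqrt; nlinarith [pow_pos htpos 6]
  -- upper bound for RHS
  have hrhs : dist (pt y) (pt (t^3)) ≤ 2*t^3 := by
    have : dist (pt y) (pt (t^3)) = Real.sqrt ((y - t^3)^2) := by
      rw [EuclideanSpace.dist_eq, Fin.sum_univ_two]
      simp [pt, toEuc, Real.dist_eq]
      try ring_nf
    rw [this, Real.sqrt_sq_eq_abs]
    have := abs_sub_abs_le_abs_sub y (t^3)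
    have h1 : |y - t^3| ≤ |y| + |t^3| := abs_sub y (t^3)
    rw [abs_of_pos (show (0:ℝ) < t^3 by positivity)] at h1
    linarith
  have hL0 : (0:ℝ) ≤ (L:ℝ) := L.coe_nonneg
  have hLd : (L:ℝ) * dist (pt y) (pt (t^3)) ≤ (L:ℝ) * (2*t^3) :=
    mul_le_mul_of_nonneg_left hrhs hL0
  have key : t^2 ≤ (L:ℝ) * (2*t^3) := by linarith
  have h6 : 4*((L:ℝ)+1)*t ≤ 1 := by
    have h4pos : (0:ℝ) < 4*((L:ℝ)+1) := by positivity
    calc 4*((L:ℝ)+1)*t ≤ 4*((L:ℝ)+1)*(1/(4*((L:ℝ)+1))) :=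
          mul_le_mul_of_nonneg_left htL h4pos.le
      _ = 1 := by field_simp
  nlinarith [mul_nonneg (sub_nonneg.mpr h6) (sq_nonneg t), pow_pos htpos 3, mul_pos htpos htpos]
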